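/- Let A be a Noetherian ring. (a) If A_P is a weakly Arf ring for every P ∈ X₁(A), then A is a weakly Arf ring. (b) If A satisfies Serre's condition (S₁) and A is a weakly Arf ring, then S⁻¹A is a weakly Arf ring for every multiplicatively closed subset S of A; in particular A_P is a weakly Arf ring for every prime ideal P of A. -/

import Mathlib

open scoped TensorProduct

/-- `A` is a *weakly Arf ring*: whenever `x, y, z ∈ A` with `x` a non-zerodivisor on `A`
and the fractions `y/x` and `z/x` in the total ring of fractions `Q(A)` are integral
over `A`, then `y * z ∈ x A`. -/
def IsWeaklyArfRing (A : Type*) [CommRing A] : Prop :=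
  ∀ (x y z : A) (hx : x ∈ nonZeroDivisors A),
    IsIntegral A (IsLocalization.mk' (FractionRing A) y
      (⟨x, hx⟩ : nonZeroDivisors A)) →
    IsIntegral A (IsLocalization.mk' (FractionRing A) z
      (⟨x, hx⟩ : nonZeroDivisors A)) →
    y * z ∈ Ideal.span {x}

/-- `xs` is a regular sequence on `R`: for each `i`, the element `xs i` acts injectively
on `R / (xs 0, …, xs (i-1))`. -/
def IsRegularSeq (R : Type*) [CommRing R] (xs : List R) : Prop :=
  ∀ (i : ℕ) (h : i < xs.length),
    IsSMulRegular (R ⧸ Ideal.span {y : R | y ∈ xs.take i}) (xs.get ⟨i, h⟩)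

/-- For a Noetherian local ring `R`, `depth R ≥ n` holds iff there is a regular sequence
of length `n` consisting of elements of the maximal ideal. -/
def RingDepthGE (R : Type*) [CommRing R] [IsLocalRing R] (n : ℕ) : Prop :=
  ∃ xs : List R, xs.length = n ∧ (∀ x ∈ xs, x ∈ IsLocalRing.maximalIdeal R) ∧
    IsRegularSeq R xs

/-- Serre's condition `(S_n)`: `depth A_P ≥ min (n, dim A_P)` for every prime ideal `P`
of `A`. -/
def SerreSCondition (A : Type*) [CommRing A] (n : ℕ) : Prop :=
  ∀ (P : Ideal A) [P.IsPrime], ∀ k : ℕ, k ≤ n →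
    (k : WithBot (WithTop ℕ)) ≤ ringKrullDim (Localization.AtPrime P) →
    RingDepthGE (Localization.AtPrime P) k

/-! ### Auxiliary machinery -/

/-- Element-level integral equation witnessing that `y/x` is integral over `A`. -/
def ElemInt (A : Type*) [CommRing A] (x y : A) : Prop :=
  ∃ (n : ℕ) (f : ℕ → A),
    y ^ (n+1) + ∑ i ∈ Finset.range (n+1), f i * x ^ (n+1-i) * y ^ i = 0

section ElemInt

variable {A B : Type*} [CommRing A] [CommRing B]

theorem elemInt_iff_isIntegral {x y : A} (hx : x ∈ nonZeroDivisors A) :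
    ElemInt A x y ↔ IsIntegral A (IsLocalization.mk' (FractionRing A) y
      (⟨x, hx⟩ : nonZeroDivisors A)) := by
  set Q := FractionRing A
  set ι := algebraMap A Q with hι
  have hinj : Function.Injective ι := IsFractionRing.injective A Q
  set ξ := IsLocalization.mk' Q y (⟨x, hx⟩ : nonZeroDivisors A) with hξ
  have hxu : IsUnit (ι x) := IsLocalization.map_units Q (⟨x, hx⟩ : nonZeroDivisors A)
  have hspec : ξ * ι x = ι y := IsLocalization.mk'_spec Q y ⟨x, hx⟩
  have key : ∀ (k i : ℕ), i ≤ k → (ι x) ^ k * ξ ^ i = ι (x ^ (k - i) * y ^ i) := by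
    intro k i hik
    calc (ι x) ^ k * ξ ^ i = (ι x) ^ (k - i) * ((ι x) ^ i * ξ ^ i) := by
          rw [← mul_assoc, ← pow_add]; congr 2; omega
      _ = ι (x ^ (k-i) * y ^ i) := by
          rw [← mul_pow, mul_comm (ι x) ξ, hspec, map_mul, map_pow, map_pow]
  have main : ∀ (n : ℕ) (g : ℕ → A),
      (ι x) ^ (n+1) * (ξ ^ (n+1) + ∑ i ∈ Finset.range (n+1), ι (g i) * ξ ^ i)
        = ι (y ^ (n+1) + ∑ i ∈ Finset.range (n+1), g i * x ^ (n+1-i) * y ^ i) := by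
    intro n g
    rw [map_add, map_sum, mul_add, Finset.mul_sum]
    congr 1
    · simpa using key (n+1) (n+1) le_rfl
    · refine Finset.sum_congr rfl fun i hi => ?_
      have hik : i ≤ n + 1 := le_of_lt (Finset.mem_range.1 hi)
      calc (ι x) ^ (n+1) * (ι (g i) * ξ ^ i) = ι (g i) * ((ι x) ^ (n+1) * ξ ^ i) := by ring
        _ = ι (g i) * ι (x ^ (n+1-i) * y ^ i) := by rw [key (n+1) i (le_trans hik le_rfl)]
        _ = ι (g i * x ^ (n+1-i) * y ^ i) := by rw [← map_mul, ← mul_assoc]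
  constructor
  · rintro ⟨n, f, hf⟩
    refine ⟨Polynomial.X ^ (n+1) + ∑ i ∈ Finset.range (n+1),
      Polynomial.C (f i) * Polynomial.X ^ i, ?_, ?_⟩
    · apply Polynomial.monic_X_pow_add
      have : (∑ i ∈ Finset.range (n+1),
          Polynomial.C (f i) * Polynomial.X ^ i).degree ≤ (n : WithBot ℕ) := by
        apply le_trans (Polynomial.degree_sum_le _ _)
        refine Finset.sup_le fun i hi => ?_
        apply le_trans (Polynomial.degree_mul_le _ _)
        refine le_trans (add_le_add Polynomial.degree_C_le (Polynomial.degree_X_pow_le i)) ?_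
        simp only [zero_add]
        exact_mod_cast Nat.cast_le.2 (Nat.lt_succ_iff.1 (Finset.mem_range.1 hi))
      refine lt_of_le_of_lt this ?_
      exact_mod_cast Nat.lt_succ_self n
    · have expand : Polynomial.eval₂ ι ξ (Polynomial.X ^ (n+1) + ∑ i ∈ Finset.range (n+1),
          Polynomial.C (f i) * Polynomial.X ^ i)
          = ξ ^ (n+1) + ∑ i ∈ Finset.range (n+1), ι (f i) * ξ ^ i := by
        simp [Polynomial.eval₂_finset_sum]
      show Polynomial.eval₂ ι ξ _ = 0
      rw [expand]
      have h2 := main n f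
      rw [hf, map_zero] at h2
      rw [mul_comm] at h2
      exact (hxu.pow (n+1)).mul_left_eq_zero.mp h2
  · rintro ⟨p, hmonic, heval⟩
    rcases Nat.eq_zero_or_pos p.natDegree with h0 | hpos
    · have hp1 : p = 1 := Polynomial.eq_one_of_monic_natDegree_zero hmonic h0
      rw [hp1] at heval
      simp only [Polynomial.eval₂_one] at heval
      have h01 : (1 : A) = 0 := hinj (by simpa using heval)
      have hall : ∀ a : A, a = 0 := fun a => by rw [← mul_one a, h01, mul_zero]
      exact ⟨0, fun _ => 0, by rw [hall (y ^ (0+1) + _)]⟩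
    · set n := p.natDegree - 1 with hn
      have hdeg : p.natDegree = n + 1 := by omega
      refine ⟨n, fun i => p.coeff i, ?_⟩
      have hsum : Polynomial.eval₂ ι ξ p
          = ξ ^ (n+1) + ∑ i ∈ Finset.range (n+1), ι (p.coeff i) * ξ ^ i := by
        rw [Polynomial.eval₂_eq_sum_range, hdeg, Finset.sum_range_succ]
        have hc : p.coeff (n+1) = 1 := by rw [← hdeg]; exact hmonic.coeff_natDegree
        rw [hc, map_one, one_mul, add_comm]
      rw [hsum] at heval
      have h2 := main n (fun i => p.coeff i)
      rw [heval, mul_zero] at h2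
      exact hinj (by rw [← h2, map_zero])

theorem ElemInt.map (φ : A →+* B) {x y : A} (h : ElemInt A x y) : ElemInt B (φ x) (φ y) := by
  obtain ⟨n, f, hf⟩ := h
  refine ⟨n, fun i => φ (f i), ?_⟩
  have := congrArg φ hf
  simpa [map_add, map_pow, map_mul, map_sum] using this

theorem ElemInt.scale (u : A) {x y : A} (h : ElemInt A x y) : ElemInt A (u * x) (u * y) := by
  obtain ⟨n, f, hf⟩ := h
  refine ⟨n, f, ?_⟩
  have hterm : ∀ i ∈ Finset.range (n+1),
      f i * (u*x) ^ (n+1-i) * (u*y) ^ i = u ^ (n+1) * (f i * x ^ (n+1-i) * y ^ i) := by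
    intro i hi
    have hii : i < n + 1 := Finset.mem_range.mp hi
    have hu : u ^ (n+1) = u ^ (n+1-i) * u ^ i := by
      rw [← pow_add]; congr 1; omega
    rw [mul_pow, mul_pow, hu]; ring
  rw [Finset.sum_congr rfl hterm, ← Finset.mul_sum, mul_pow, ← mul_add, hf, mul_zero]

/-- If `v * x = v * x'`, an integral equation for `y` w.r.t. `x` gives one
for `v * y` w.r.t. `x'`. -/
theorem ElemInt.change {v x x' : A} (h : v * x = v * x') {y : A} (hE : ElemInt A x y) :
    ElemInt A x' (v * y) := by
  obtain ⟨n, f, hf⟩ := hE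
  refine ⟨n, fun i => f i * v ^ (n+1-i), ?_⟩
  have hterm : ∀ i ∈ Finset.range (n+1),
      f i * v ^ (n+1-i) * x' ^ (n+1-i) * (v*y) ^ i
        = v ^ (n+1) * (f i * x ^ (n+1-i) * y ^ i) := by
    intro i hi
    have hii : i < n + 1 := Finset.mem_range.mp hi
    have hvx : (v * x') ^ (n+1-i) = (v * x) ^ (n+1-i) := by rw [h]
    have hu : v ^ (n+1) = v ^ (n+1-i) * v ^ i := by
      rw [← pow_add]; congr 1; omega
    calc f i * v ^ (n+1-i) * x' ^ (n+1-i) * (v*y) ^ i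
        = f i * (v * x') ^ (n+1-i) * (v*y) ^ i := by rw [mul_pow v x']; ring
      _ = f i * (v * x) ^ (n+1-i) * (v*y) ^ i := by rw [hvx]
      _ = v ^ (n+1) * (f i * x ^ (n+1-i) * y ^ i) := by rw [mul_pow, mul_pow, hu]; ring
  rw [Finset.sum_congr rfl hterm, ← Finset.mul_sum, mul_pow, ← mul_add, hf, mul_zero]

end ElemInt

section Localization

variable {A : Type*} [CommRing A] (S : Submonoid A)

/-- Nonzerodivisors map to nonzerodivisors in a localization. -/
theorem nzd_map_localization {x : A} (hx : x ∈ nonZeroDivisors A) :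
    algebraMap A (Localization S) x ∈ nonZeroDivisors (Localization S) := by
  set B := Localization S
  set ι := algebraMap A B
  rw [mem_nonZeroDivisors_iff_right]
  intro c hc
  obtain ⟨a, s, rfl⟩ := IsLocalization.exists_mk'_eq S c
  have h1 : IsLocalization.mk' B a s * ι x * ι (s : A) = ι (a * x) := by
    rw [mul_comm (IsLocalization.mk' B a s) (ι x), mul_assoc, IsLocalization.mk'_spec,
      ← map_mul, mul_comm]
  rw [hc, zero_mul] at h1
  obtain ⟨m, hm⟩ := (IsLocalization.map_eq_zero_iff S B _).mp h1.symm
  have hma : (m : A) * a = 0 := (mem_nonZeroDivisors_iff_right.mp hx) _ (by rwa [← mul_assoc] at hm)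
  have : ι a = 0 := (IsLocalization.map_eq_zero_iff S B _).mpr ⟨m, hma⟩
  rw [IsLocalization.mk'_eq_mul_mk'_one, this, zero_mul]

/-- Descend an integral equation between images in the localization to the base ring,
at the cost of multiplying the numerator by an element of `S`. -/
theorem elemInt_descend {a b : A}
    (h : ElemInt (Localization S) (algebraMap A (Localization S) a)
      (algebraMap A (Localization S) b)) :
    ∃ w : S, ElemInt A a ((w : A) * b) := by
  classical
  set B := Localization S
  set ι := algebraMap A B with hι
  obtain ⟨n, f, hf⟩ := h
  choose g t hgt using fun i => IsLocalization.exists_mk'_eq S (f i)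
  have hrep : ∀ i, ι (g i) = f i * ι (t i : A) := by
    intro i
    rw [← hgt i, IsLocalization.mk'_spec]
  set τ : S := ∏ i ∈ Finset.range (n+1), t i with hτ
  set g' : ℕ → A := fun i => g i * ∏ j ∈ (Finset.range (n+1)).erase i, (t j : A) with hg'
  have hrep' : ∀ i ∈ Finset.range (n+1), ι (g' i) = f i * ι (τ : A) := by
    intro i hi
    have : (τ : A) = (t i : A) * ∏ j ∈ (Finset.range (n+1)).erase i, (t j : A) := by
      rw [hτ, ← Finset.mul_prod_erase _ _ hi]
      push_cast
      rfl
    rw [hg', map_mul, hrep i, this, map_mul]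
    ring
  have key : ι ((τ:A) * b ^ (n+1) + ∑ i ∈ Finset.range (n+1), g' i * a ^ (n+1-i) * b ^ i) = 0 := by
    have expand : ι ((τ:A) * b ^ (n+1) + ∑ i ∈ Finset.range (n+1), g' i * a ^ (n+1-i) * b ^ i)
        = ι (τ:A) * ((ι b) ^ (n+1)
            + ∑ i ∈ Finset.range (n+1), f i * (ι a) ^ (n+1-i) * (ι b) ^ i) := by
      rw [map_add, map_mul, map_pow, map_sum, mul_add, Finset.mul_sum]
      congr 1
      refine Finset.sum_congr rfl fun i hi => ?_
      rw [map_mul, map_mul, hrep' i hi, map_pow, map_pow]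
      ring
    rw [expand, hf, mul_zero]
  obtain ⟨u, hu⟩ := (IsLocalization.map_eq_zero_iff S B _).mp key
  refine ⟨u * τ, ⟨n, fun i => (u:A) * g' i * ((u:A) * τ) ^ (n-i), ?_⟩⟩
  have hterm : ∀ i ∈ Finset.range (n+1),
      (u:A) * g' i * ((u:A) * (τ:A)) ^ (n-i) * a ^ (n+1-i) * (((u:A) * (τ:A)) * b) ^ i
        = ((u:A)*(τ:A)) ^ n * ((u:A) * (g' i * a ^ (n+1-i) * b ^ i)) := by
    intro i hi
    have hii : i < n + 1 := Finset.mem_range.mp hi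
    have hp : ((u:A)*(τ:A)) ^ n = ((u:A)*(τ:A)) ^ (n-i) * ((u:A)*(τ:A)) ^ i := by
      rw [← pow_add]; congr 1; omega
    rw [hp, mul_pow ((u:A)*(τ:A)) b]; ring
  have hhead : (((u:A) * (τ:A)) * b) ^ (n+1)
      = ((u:A)*(τ:A)) ^ n * ((u:A) * ((τ:A) * b ^ (n+1))) := by
    rw [mul_pow]; ring
  push_cast
  rw [hhead, Finset.sum_congr rfl hterm, ← Finset.mul_sum, ← mul_add, ← Finset.mul_sum,
    ← mul_add, hu, mul_zero]

end Localization

/-- An element acting injectively on `R ⧸ I` pulls membership in `I` back along multiplication. -/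
theorem reg_quot {R : Type*} [CommRing R] {I : Ideal R} {a : R}
    (h : IsSMulRegular (R ⧸ I) a) {u : R} (hu : a * u ∈ I) : u ∈ I := by
  have h0 : a • (Ideal.Quotient.mk I u) = a • (Ideal.Quotient.mk I 0) := by
    show Ideal.Quotient.mk I (a * u) = Ideal.Quotient.mk I (a * 0)
    rw [mul_zero, map_zero, Ideal.Quotient.eq_zero_iff_mem]
    exact hu
  have := h h0
  rwa [map_zero, Ideal.Quotient.eq_zero_iff_mem] at this

/-- Part (a). -/
theorem weaklyArf_of_localizations {A : Type*} [CommRing A] [IsNoetherianRing A]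
    (h : ∀ (P : Ideal A) [P.IsPrime], ¬ RingDepthGE (Localization.AtPrime P) 2 →
        IsWeaklyArfRing (Localization.AtPrime P)) :
    IsWeaklyArfRing A := by
  classical
  intro x y z hx hy hz
  by_contra hyz
  set I := Ideal.span {x} with hI
  set q : A ⧸ I := Ideal.Quotient.mk I (y * z) with hq
  have hq0 : q ≠ 0 := fun hq' => hyz (by rwa [hq, Ideal.Quotient.eq_zero_iff_mem] at hq')
  obtain ⟨P, hPass, hPle⟩ := exists_le_isAssociatedPrime_of_isNoetherianRing A q hq0
  obtain ⟨hPprime, w', hw'⟩ := isAssociatedPrime_iff.mp hPass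
  haveI := hPprime
  obtain ⟨w, rfl⟩ := Ideal.Quotient.mk_surjective w'
  have hmemP : ∀ a : A, a ∈ P ↔ a * w ∈ I := by
    intro a
    rw [hw', Submodule.mem_colon_singleton, Submodule.mem_bot]
    show a • (Ideal.Quotient.mk I w) = 0 ↔ _
    show Ideal.Quotient.mk I (a * w) = 0 ↔ _
    rw [Ideal.Quotient.eq_zero_iff_mem]
  have hannle : ∀ a : A, a * (y*z) ∈ I → a ∈ P := by
    intro a ha
    apply hPle
    rw [Submodule.mem_colon_singleton, Submodule.mem_bot]
    show Ideal.Quotient.mk I (a * (y*z)) = 0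
    rw [Ideal.Quotient.eq_zero_iff_mem]
    exact ha
  set L := Localization.AtPrime P with hL
  set ι := algebraMap A L with hιL
  have hxL : ι x ∈ nonZeroDivisors L := nzd_map_localization _ hx
  have hmw : ∀ m : L, m ∈ IsLocalRing.maximalIdeal L → ∃ d : L, m * ι w = ι x * d := by
    intro m hm
    obtain ⟨r, s, rfl⟩ := IsLocalization.exists_mk'_eq P.primeCompl m
    have hr : r ∈ P := (IsLocalization.AtPrime.mk'_mem_maximal_iff _ P r s).mp hm
    obtain ⟨d₀, hd₀⟩ := Ideal.mem_span_singleton'.mp ((hmemP r).mp hr)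
    refine ⟨ι d₀ * IsLocalization.mk' L 1 s, ?_⟩
    rw [IsLocalization.mk'_eq_mul_mk'_one]
    calc ι r * IsLocalization.mk' L 1 s * ι w
        = ι (r * w) * IsLocalization.mk' L 1 s := by rw [map_mul]; ring
      _ = ι (d₀ * x) * IsLocalization.mk' L 1 s := by rw [hd₀]
      _ = ι x * (ι d₀ * IsLocalization.mk' L 1 s) := by rw [map_mul]; ring
  have hwnx : ¬ ∃ d : L, ι w = ι x * d := by
    rintro ⟨d, hd⟩
    obtain ⟨e, s, rfl⟩ := IsLocalization.exists_mk'_eq P.primeCompl d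
    have h1 : ι (w * s) = ι (x * e) := by
      rw [map_mul, map_mul, hd, mul_assoc, IsLocalization.mk'_spec]
    obtain ⟨c, hc⟩ := (IsLocalization.eq_iff_exists P.primeCompl L).mp h1
    have hmem : ((c:A) * s) * w ∈ I := by
      refine Ideal.mem_span_singleton'.mpr ⟨(c:A) * e, ?_⟩
      linear_combination -hc
    have : (c:A) * s ∈ P := (hmemP _).mpr hmem
    exact (P.primeCompl.mul_mem c.2 s.2) this
  have hdepth : ¬ RingDepthGE L 2 := by
    rintro ⟨xs, hlen, hmem, hreg⟩
    rcases xs with _ | ⟨a, _ | ⟨b, _ | ⟨c, rest⟩⟩⟩ <;> simp at hlen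
    have ha : a ∈ IsLocalRing.maximalIdeal L := hmem a (by simp)
    have hb : b ∈ IsLocalRing.maximalIdeal L := hmem b (by simp)
    have hrega : IsSMulRegular (L ⧸ Ideal.span {u : L | u ∈ ([a, b]).take 0}) a :=
      hreg 0 (by simp)
    have hregb : IsSMulRegular (L ⧸ Ideal.span {u : L | u ∈ ([a, b]).take 1}) b :=
      hreg 1 (by simp)
    have hset0 : {u : L | u ∈ ([a, b]).take 0} = (∅ : Set L) := by ext u; simp
    have hset1 : {u : L | u ∈ ([a, b]).take 1} = ({a} : Set L) := by ext u; simp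
    rw [hset0, Ideal.span_empty] at hrega
    rw [hset1] at hregb
    have areg : ∀ u : L, a * u = 0 → u = 0 := by
      intro u hu
      have := reg_quot hrega (u := u) (by rwa [Ideal.mem_bot])
      rwa [Ideal.mem_bot] at this
    obtain ⟨w₁, hw₁⟩ := hmw a ha
    obtain ⟨w₂, hw₂⟩ := hmw b hb
    have hcalc : ι x * (b * w₁) = ι x * (a * w₂) := by
      calc ι x * (b * w₁) = b * (ι x * w₁) := by ring
        _ = b * (a * ι w) := by rw [← hw₁]
        _ = a * (b * ι w) := by ring
        _ = a * (ι x * w₂) := by rw [← hw₂]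
        _ = ι x * (a * w₂) := by ring
    have hbw : b * w₁ = a * w₂ := (mul_cancel_left_mem_nonZeroDivisors hxL).mp hcalc
    have hw₁a : w₁ ∈ Ideal.span ({a} : Set L) := by
      apply reg_quot hregb
      rw [hbw]
      exact Ideal.mem_span_singleton'.mpr ⟨w₂, by ring⟩
    obtain ⟨u, hu⟩ := Ideal.mem_span_singleton'.mp hw₁a
    have h0 : a * (ι w - ι x * u) = 0 := by
      have : a * ι w = ι x * w₁ := hw₁
      rw [mul_sub, this, ← hu]
      ring
    have := areg _ h0
    exact hwnx ⟨u, by rwa [sub_eq_zero] at this⟩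
  have hWA := h P hdepth
  have hyL : IsIntegral L (IsLocalization.mk' (FractionRing L) (ι y)
      (⟨ι x, hxL⟩ : nonZeroDivisors L)) :=
    (elemInt_iff_isIntegral hxL).mp (((elemInt_iff_isIntegral hx).mpr hy).map ι)
  have hzL : IsIntegral L (IsLocalization.mk' (FractionRing L) (ι z)
      (⟨ι x, hxL⟩ : nonZeroDivisors L)) :=
    (elemInt_iff_isIntegral hxL).mp (((elemInt_iff_isIntegral hx).mpr hz).map ι)
  have hsp := hWA (ι x) (ι y) (ι z) hxL hyL hzL
  obtain ⟨d, hd⟩ := Ideal.mem_span_singleton'.mp hsp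
  obtain ⟨e, s, rfl⟩ := IsLocalization.exists_mk'_eq P.primeCompl d
  have h1 : ι (e * x) = ι (y * z * s) := by
    calc ι (e * x) = (IsLocalization.mk' L e s * ι (s:A)) * ι x := by
          rw [IsLocalization.mk'_spec, map_mul]
      _ = (IsLocalization.mk' L e s * ι x) * ι (s:A) := by ring
      _ = (ι y * ι z) * ι (s:A) := by rw [hd]
      _ = ι (y * z * s) := by rw [map_mul, map_mul]
  obtain ⟨c, hc⟩ := (IsLocalization.eq_iff_exists P.primeCompl L).mp h1
  have hmem : ((c:A) * s) * (y * z) ∈ I := by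
    refine Ideal.mem_span_singleton'.mpr ⟨(c:A) * e, ?_⟩
    linear_combination hc
  exact (P.primeCompl.mul_mem c.2 s.2) (hannle _ hmem)
theorem exists_assoc_of_not_nzd {A : Type*} [CommRing A] [IsNoetherianRing A] {a : A}
    (ha : a ∉ nonZeroDivisors A) : ∃ P, IsAssociatedPrime P A ∧ a ∈ P := by
  rw [mem_nonZeroDivisors_iff_right] at ha
  push_neg at ha
  obtain ⟨e, he0, hene⟩ := ha
  obtain ⟨P, hP, hle⟩ := exists_le_isAssociatedPrime_of_isNoetherianRing A e hene
  refine ⟨P, hP, hle ?_⟩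
  rw [Submodule.mem_colon_singleton, Submodule.mem_bot, smul_eq_mul, mul_comm]
  exact he0

theorem nilpotent_in_localization_minimal {A : Type*} [CommRing A] {P : Ideal A} [P.IsPrime]
    (hPmin : P ∈ minimalPrimes A) {t : A} (ht : t ∈ P) :
    IsNilpotent (algebraMap A (Localization.AtPrime P) t) := by
  rw [← mem_nilradical, nilradical_eq_sInf, Ideal.mem_sInf]
  intro J hJ
  have hJ' : (J : Ideal (Localization.AtPrime P)).IsPrime := hJ
  set ι := algebraMap A (Localization.AtPrime P)
  have hQle : J.comap ι ≤ P := by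
    intro u hu
    by_contra huP
    have hunit : IsUnit (ι u) := IsLocalization.map_units _ (⟨u, huP⟩ : P.primeCompl)
    exact hJ'.ne_top (Ideal.eq_top_of_isUnit_mem _ hu hunit)
  haveI := hJ'
  have hQprime : (J.comap ι).IsPrime := Ideal.IsPrime.comap ι
  have hle : P ≤ J.comap ι := hPmin.2 ⟨hQprime, bot_le⟩ hQle
  exact hle ht

theorem not_nzd_of_mem_minimal_disjoint {A : Type*} [CommRing A] (S : Submonoid A)
    {P : Ideal A} [P.IsPrime] (hPmin : P ∈ minimalPrimes A)
    (hdisj : ∀ s : S, (s : A) ∉ P) {a : A} (haP : a ∈ P) :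
    algebraMap A (Localization S) a ∉ nonZeroDivisors (Localization S) := by
  classical
  set L := Localization.AtPrime P with hLdef
  set ιP := algebraMap A L with hιP
  set ιS := algebraMap A (Localization S) with hιS
  obtain ⟨N, hN⟩ := nilpotent_in_localization_minimal hPmin haP
  have h1 : ∃ n, (ιP a) ^ n = 0 := ⟨N, hN⟩
  set k := Nat.find h1 with hkdef
  have hk : (ιP a) ^ k = 0 := Nat.find_spec h1
  have hk0 : k ≠ 0 := by
    intro h0
    rw [h0, pow_zero] at hk
    exact one_ne_zero hk
  have hq : (ιP a) ^ (k-1) ≠ 0 := Nat.find_min h1 (by omega)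
  obtain ⟨e, s, hes⟩ := IsLocalization.exists_mk'_eq P.primeCompl ((ιP a) ^ (k-1))
  have heP : ιP e ≠ 0 := by
    intro h0
    apply hq
    rw [← hes, IsLocalization.mk'_eq_mul_mk'_one, h0, zero_mul]
  have h2 : ιP (a * e) = 0 := by
    have he : ιP e = (ιP a) ^ (k-1) * ιP (s : A) := by
      rw [← hes, ← IsLocalization.mk'_spec L e s]
    have hk' : ιP a * (ιP a) ^ (k-1) = (ιP a) ^ k := by
      rw [← pow_succ']
      congr 1
      omega
    rw [map_mul, he, ← mul_assoc, hk', hk, zero_mul]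
  obtain ⟨u, hu⟩ := (IsLocalization.map_eq_zero_iff P.primeCompl L _).mp h2
  intro hnzd
  rw [mem_nonZeroDivisors_iff_right] at hnzd
  have hz : ιS ((u:A) * e) * ιS a = 0 := by
    have hA : (u:A) * e * a = 0 := by linear_combination hu
    rw [← map_mul, hA, map_zero]
  have h3 : ιS ((u:A)*e) = 0 := hnzd _ hz
  obtain ⟨v, hv⟩ := (IsLocalization.map_eq_zero_iff S _ _).mp h3
  have h4 : ιP e = 0 := by
    refine (IsLocalization.map_eq_zero_iff P.primeCompl L _).mpr
      ⟨⟨(v:A) * u, P.primeCompl.mul_mem (hdisj v) u.2⟩, ?_⟩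
    show (v:A) * (u:A) * e = 0
    linear_combination hv
  exact heP h4

theorem assoc_prime_minimal {A : Type*} [CommRing A] [IsNoetherianRing A]
    (hS1 : SerreSCondition A 1) {P : Ideal A} (hP : IsAssociatedPrime P A) :
    P ∈ minimalPrimes A := by
  haveI := hP.isPrime
  have key : ∀ Q : Ideal A, Q.IsPrime → Q ≤ P → Q = P := by
    intro Q hQ hQP
    by_contra hne
    set L := Localization.AtPrime P with hLdef
    set ι := algebraMap A L with hι
    have hdisj : Disjoint ((P.primeCompl : Submonoid A) : Set A) (Q : Set A) := by
      rw [Set.disjoint_left]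
      intro t ht1 ht2
      exact ht1 (hQP ht2)
    have hQL : (Q.map ι).IsPrime :=
      IsLocalization.isPrime_of_isPrime_disjoint P.primeCompl L Q hQ hdisj
    have hcomap : (Q.map ι).comap ι = Q :=
      IsLocalization.comap_map_of_isPrime_disjoint P.primeCompl L hQ hdisj
    have hneq : Q.map ι ≠ IsLocalRing.maximalIdeal L := by
      intro hEq
      apply hne
      rw [← hcomap, hEq]
      exact Localization.AtPrime.comap_maximalIdeal
    have hlt : (⟨Q.map ι, hQL⟩ : PrimeSpectrum L)
        < ⟨IsLocalRing.maximalIdeal L, (IsLocalRing.maximalIdeal.isMaximal L).isPrime⟩ := by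
      rw [← PrimeSpectrum.asIdeal_lt_asIdeal]
      exact lt_of_le_of_ne (IsLocalRing.le_maximalIdeal hQL.ne_top) hneq
    have hdim : (1 : WithBot (WithTop ℕ)) ≤ ringKrullDim L := by
      have := Order.LTSeries.length_le_krullDim
        ((RelSeries.singleton _ (⟨Q.map ι, hQL⟩ : PrimeSpectrum L)).snoc _ (by simpa using hlt))
      exact (by simpa [ringKrullDim] using this : (1 : WithBot ℕ∞) ≤ ringKrullDim L)
    obtain ⟨xs, hlen, hmem, hreg⟩ := hS1 P 1 le_rfl hdim
    rcases xs with _ | ⟨a, _ | _⟩ <;> simp at hlen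
    have ha : a ∈ IsLocalRing.maximalIdeal L := hmem a (by simp)
    have hrega : IsSMulRegular (L ⧸ Ideal.span {u : L | u ∈ ([a]).take 0}) a := hreg 0 (by simp)
    have hset0 : {u : L | u ∈ ([a]).take 0} = (∅ : Set L) := by ext u; simp
    rw [hset0, Ideal.span_empty] at hrega
    obtain ⟨e', he'⟩ := (isAssociatedPrime_iff.mp hP).2
    have hmemP : ∀ r : A, r ∈ P ↔ r * e' = 0 := fun r => by
      rw [he', Submodule.mem_colon_singleton, Submodule.mem_bot, smul_eq_mul]
    have he0 : ι e' ≠ 0 := by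
      intro h0
      obtain ⟨v, hv⟩ := (IsLocalization.map_eq_zero_iff P.primeCompl L _).mp h0
      exact v.2 ((hmemP (v:A)).mpr hv)
    obtain ⟨r, s, rfl⟩ := IsLocalization.exists_mk'_eq P.primeCompl a
    have hr : r ∈ P := (IsLocalization.AtPrime.mk'_mem_maximal_iff _ P r s).mp ha
    have hze : IsLocalization.mk' L r s * ι e' = 0 := by
      calc IsLocalization.mk' L r s * ι e'
          = ι (r * e') * IsLocalization.mk' L 1 s := by
            rw [IsLocalization.mk'_eq_mul_mk'_one, map_mul]; ring
        _ = 0 := by rw [(hmemP r).mp hr, map_zero, zero_mul]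
    have : ι e' ∈ (⊥ : Ideal L) := reg_quot hrega (by rwa [Ideal.mem_bot])
    exact he0 (by rwa [Ideal.mem_bot] at this)
  obtain ⟨p, hp, hple⟩ := Ideal.exists_minimalPrimes_le (bot_le : ⊥ ≤ P)
  have hpPrime : p.IsPrime := hp.1.1
  have := key p hpPrime hple
  rwa [this] at hp
/-- Davis' prime avoidance: given a finite set of pairwise incomparable primes, an ideal `K`,
and `a` such that for no `P` in the set both `K ≤ P` and `a ∈ P`, there is `λ ∈ K` with
`a + λ` outside every `P`. -/
theorem davis_avoidance {A : Type*} [CommRing A] (Ps : Finset (Ideal A))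
    (hprime : ∀ P ∈ Ps, P.IsPrime) (hinc : ∀ P ∈ Ps, ∀ Q ∈ Ps, P ≤ Q → P = Q)
    (K : Ideal A) (a : A) (hcond : ∀ P ∈ Ps, K ≤ P → a ∉ P) :
    ∃ l ∈ K, ∀ P ∈ Ps, a + l ∉ P := by
  classical
  induction Ps using Finset.induction with
  | empty => exact ⟨0, K.zero_mem, by simp⟩
  | @insert Q Ps2 hQnotmem ih =>
    obtain ⟨l, hlK, hl⟩ := ih (fun P hP => hprime P (Finset.mem_insert_of_mem hP))
      (fun P hP Q' hQ' => hinc P (Finset.mem_insert_of_mem hP) Q' (Finset.mem_insert_of_mem hQ'))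
      (fun P hP => hcond P (Finset.mem_insert_of_mem hP))
    have hQprime : Q.IsPrime := hprime Q (Finset.mem_insert_self Q Ps2)
    by_cases hbQ : a + l ∈ Q
    · -- adjust: K ⊄ Q
      have hKQ : ¬ K ≤ Q := by
        intro hKQ
        exact hcond Q (Finset.mem_insert_self Q Ps2) hKQ
          (by have := hKQ hlK; have : a = (a + l) - l := by ring
              rw [this]; exact Q.sub_mem hbQ (hKQ hlK))
      obtain ⟨μ, hμK, hμQ⟩ := SetLike.not_le_iff_exists.mp hKQ
      -- pick elements of each P ∈ Ps2 not in Q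
      have hchoice : ∀ P ∈ Ps2, ∃ p, p ∈ P ∧ p ∉ Q := by
        intro P hP
        have hPQ : ¬ P ≤ Q := by
          intro hle
          have := hinc P (Finset.mem_insert_of_mem hP) Q (Finset.mem_insert_self Q Ps2) hle
          exact hQnotmem (this ▸ hP)
        exact SetLike.not_le_iff_exists.mp hPQ
      choose p hp1 hp2 using hchoice
      set π : A := ∏ P ∈ Ps2.attach, p P.1 P.2 with hπ
      have hπQ : π ∉ Q := by
        intro hπQ
        obtain ⟨P, hPmem, hPQ⟩ := (Ideal.IsPrime.prod_mem_iff (hp := hQprime)).mp hπQ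
        exact hp2 P.1 P.2 hPQ
      have hπP : ∀ P ∈ Ps2, π ∈ P := by
        intro P hP
        have : p P hP ∣ π := Finset.dvd_prod_of_mem _ (Finset.mem_attach Ps2 ⟨P, hP⟩)
        obtain ⟨c, hc⟩ := this
        rw [hπ] at hc ⊢
        rw [hc]
        exact Ideal.mul_mem_right _ _ (hp1 P hP)
      refine ⟨l + μ * π, K.add_mem hlK (K.mul_mem_right _ hμK), ?_⟩
      intro P hP
      rcases Finset.mem_insert.mp hP with rfl | hP'
      · intro hmem
        have : μ * π ∈ P := by
          have : μ * π = (a + (l + μ * π)) - (a + l) := by ring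
          rw [this]
          exact P.sub_mem hmem hbQ
        rcases hQprime.mem_or_mem this with h | h
        · exact hμQ h
        · exact hπQ h
      · intro hmem
        apply hl P hP'
        have : a + l = (a + (l + μ * π)) - μ * π := by ring
        rw [this]
        exact P.sub_mem hmem (Ideal.mul_mem_left _ _ (hπP P hP'))
    · exact ⟨l, hlK, fun P hP => by
        rcases Finset.mem_insert.mp hP with rfl | hP'
        · exact hbQ
        · exact hl P hP'⟩

/-- Part (b): localizations of a weakly Arf ring satisfying `(S₁)` are weakly Arf. -/
theorem weaklyArf_localization_of_S1 {A : Type*} [CommRing A] [IsNoetherianRing A]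
    (hS1 : SerreSCondition A 1) (hWA : IsWeaklyArfRing A) (S : Submonoid A) :
    IsWeaklyArfRing (Localization S) := by
  classical
  set B := Localization S with hB
  set ι := algebraMap A B with hι
  intro x y z hx hy hz
  have hEy : ElemInt B x y := (elemInt_iff_isIntegral hx).mpr hy
  have hEz : ElemInt B x z := (elemInt_iff_isIntegral hx).mpr hz
  obtain ⟨a₁, s₁, hx1⟩ := IsLocalization.exists_mk'_eq S x
  obtain ⟨b₁, s₂, hy1⟩ := IsLocalization.exists_mk'_eq S y
  obtain ⟨c₁, s₃, hz1⟩ := IsLocalization.exists_mk'_eq S z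
  set σ : S := s₁ * s₂ * s₃ with hσ
  set a₀ : A := a₁ * ((s₂ : A) * (s₃ : A)) with ha₀
  set b₀ : A := b₁ * ((s₁ : A) * (s₃ : A)) with hb₀
  set c₀ : A := c₁ * ((s₁ : A) * (s₂ : A)) with hc₀
  have hσA : ((σ : A)) = (s₁ : A) * (s₂ : A) * (s₃ : A) := by
    rw [hσ]; push_cast; ring
  have e_a : ι a₀ = x * ι (σ : A) := by
    have h1 : ι a₁ = x * ι (s₁ : A) := by rw [← hx1, IsLocalization.mk'_spec]
    rw [ha₀, map_mul, h1, hσA, map_mul, map_mul, map_mul]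
    ring
  have e_b : ι b₀ = y * ι (σ : A) := by
    have h1 : ι b₁ = y * ι (s₂ : A) := by rw [← hy1, IsLocalization.mk'_spec]
    rw [hb₀, map_mul, h1, hσA, map_mul, map_mul, map_mul]
    ring
  have e_c : ι c₀ = z * ι (σ : A) := by
    have h1 : ι c₁ = z * ι (s₃ : A) := by rw [← hz1, IsLocalization.mk'_spec]
    rw [hc₀, map_mul, h1, hσA, map_mul, map_mul, map_mul]
    ring
  have hσunit : IsUnit (ι (σ : A)) := IsLocalization.map_units B σ
  have hσnzd : ι (σ : A) ∈ nonZeroDivisors B := by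
    rw [mem_nonZeroDivisors_iff_right]
    intro c hc
    exact hσunit.mul_left_eq_zero.mp hc
  have hanzd : ι a₀ ∈ nonZeroDivisors B := by
    rw [e_a]
    exact mul_mem hx hσnzd
  -- descend the integral equations
  have hEyB : ElemInt B (ι a₀) (ι b₀) := by
    rw [e_a, e_b, mul_comm x (ι (σ:A)), mul_comm y (ι (σ:A))]
    exact hEy.scale _
  have hEzB : ElemInt B (ι a₀) (ι c₀) := by
    rw [e_a, e_c, mul_comm x (ι (σ:A)), mul_comm z (ι (σ:A))]
    exact hEz.scale _
  obtain ⟨w₂, hw₂⟩ := elemInt_descend S hEyB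
  obtain ⟨w₃, hw₃⟩ := elemInt_descend S hEzB
  have hEb : ElemInt A a₀ ((w₃ : A) * ((w₂ : A) * b₀)) := ElemInt.change rfl hw₂
  have hEc : ElemInt A a₀ ((w₂ : A) * ((w₃ : A) * c₀)) := ElemInt.change rfl hw₃
  -- the kernel ideal
  set K : Ideal A := RingHom.ker ι with hK
  -- minimal primes
  have hfin := minimalPrimes.finite_of_isNoetherianRing A
  set Ps : Finset (Ideal A) := hfin.toFinset with hPs
  have hPs_mem : ∀ P : Ideal A, P ∈ Ps ↔ P ∈ minimalPrimes A := fun P => hfin.mem_toFinset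
  have hPsprime : ∀ P ∈ Ps, P.IsPrime := fun P hP => ((hPs_mem P).mp hP).1.1
  have hPsinc : ∀ P ∈ Ps, ∀ Q ∈ Ps, P ≤ Q → P = Q := by
    intro P hP Q hQ hPQ
    exact le_antisymm hPQ (((hPs_mem Q).mp hQ).2 ⟨hPsprime P hP, bot_le⟩ hPQ)
  have hcond : ∀ P ∈ Ps, K ≤ P → a₀ ∉ P := by
    intro P hP hKP ha₀P
    have hPmin := (hPs_mem P).mp hP
    haveI : P.IsPrime := hPmin.1.1
    by_cases hdis : ∃ s : S, (s : A) ∈ P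
    · obtain ⟨t, ht⟩ := hdis
      obtain ⟨N, hN⟩ := nilpotent_in_localization_minimal hPmin ht
      have h0 : algebraMap A (Localization.AtPrime P) ((t : A) ^ N) = 0 := by
        rw [map_pow]; exact hN
      obtain ⟨u, hu⟩ := (IsLocalization.map_eq_zero_iff P.primeCompl _ _).mp h0
      have huK : (u : A) ∈ K := by
        rw [hK, RingHom.mem_ker]
        have h1 : ι ((u : A)) * ι ((t : A) ^ N) = 0 := by
          rw [← map_mul, hu, map_zero]
        have hunit : IsUnit (ι ((t : A) ^ N)) := by
          have := (IsLocalization.map_units B t).pow N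
          rwa [← map_pow] at this
        exact hunit.mul_left_eq_zero.mp h1
      exact u.2 (hKP huK)
    · push_neg at hdis
      exact (not_nzd_of_mem_minimal_disjoint S hPmin hdis ha₀P) hanzd
  obtain ⟨lam, hlamK, hlam⟩ := davis_avoidance Ps hPsprime hPsinc K a₀ hcond
  set ta : A := a₀ + lam with hta
  have htanzd : ta ∈ nonZeroDivisors A := by
    by_contra hnot
    obtain ⟨P, hPass, htaP⟩ := exists_assoc_of_not_nzd hnot
    exact hlam P ((hPs_mem P).mpr (assoc_prime_minimal hS1 hPass)) htaP
  have hιlam : ι lam = 0 := hlamK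
  obtain ⟨v, hv⟩ := (IsLocalization.map_eq_zero_iff S B _).mp hιlam
  have hva : (v : A) * a₀ = (v : A) * ta := by
    rw [hta, mul_add, hv, add_zero]
  have hEb' : ElemInt A ta ((v : A) * ((w₃ : A) * ((w₂ : A) * b₀))) := ElemInt.change hva hEb
  have hEc' : ElemInt A ta ((v : A) * ((w₂ : A) * ((w₃ : A) * c₀))) := ElemInt.change hva hEc
  have happ := hWA _ _ _ htanzd ((elemInt_iff_isIntegral htanzd).mp hEb')
    ((elemInt_iff_isIntegral htanzd).mp hEc')
  obtain ⟨d, hd⟩ := Ideal.mem_span_singleton'.mp happ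
  -- hd : d * ta = (v * (w₃ * (w₂ * b₀))) * (v * (w₂ * (w₃ * c₀)))
  set g : A := (v : A) * (w₂ : A) * (w₃ : A) with hg
  have hd' : d * ta = g ^ 2 * (b₀ * c₀) := by
    rw [hd, hg]; ring
  have hιta : ι ta = ι a₀ := by
    rw [hta, map_add, hιlam, add_zero]
  -- map to B
  have hBeq : (ι d * x) * ι (σ : A) = ((ι g ^ 2 * (y * z) * ι (σ : A)) * ι (σ : A)) := by
    have := congrArg ι hd'
    simp only [map_mul, map_pow] at this
    rw [hιta, e_a, e_b, e_c] at this
    calc (ι d * x) * ι (σ : A) = ι d * (x * ι (σ : A)) := by ring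
      _ = ι g ^ 2 * (y * ι (σ : A) * (z * ι (σ : A))) := this
      _ = (ι g ^ 2 * (y * z) * ι (σ : A)) * ι (σ : A) := by ring
  have hBeq2 : ι d * x = ι g ^ 2 * (y * z) * ι (σ : A) :=
    (mul_cancel_right_mem_nonZeroDivisors hσnzd).mp hBeq
  -- the S-element g^2 * σ
  set T : S := (v * w₂ * w₃) * (v * w₂ * w₃) * σ with hT
  have hTA : ((T : A)) = g ^ 2 * (σ : A) := by
    rw [hT, hg]; push_cast; ring
  have hfinal : ι (T : A) * (y * z) = ι d * x := by
    rw [hTA, map_mul, map_pow, hBeq2]; ring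
  have hTunit : IsUnit (ι (T : A)) := IsLocalization.map_units B T
  refine Ideal.mem_span_singleton'.mpr ⟨(hTunit.unit⁻¹ : Bˣ) * ι d, ?_⟩
  calc ((hTunit.unit⁻¹ : Bˣ) : B) * ι d * x = ((hTunit.unit⁻¹ : Bˣ) : B) * (ι d * x) := by ring
    _ = ((hTunit.unit⁻¹ : Bˣ) : B) * (ι (T : A) * (y * z)) := by rw [hfinal]
    _ = (((hTunit.unit⁻¹ : Bˣ) : B) * ι (T : A)) * (y * z) := by ring
    _ = y * z := by rw [IsUnit.val_inv_mul, one_mul]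

/-- (a) If `A_P` is weakly Arf for every `P ∈ X₁(A)`, then `A` is weakly Arf.
(b) If `A` satisfies `(S₁)` and `A` is weakly Arf, then `S⁻¹A` is weakly Arf for every
multiplicatively closed subset `S`; in particular every `A_P` is weakly Arf. -/
theorem weaklyArf_localization (A : Type*) [CommRing A] [IsNoetherianRing A] :
    ((∀ (P : Ideal A) [P.IsPrime], ¬ RingDepthGE (Localization.AtPrime P) 2 →
        IsWeaklyArfRing (Localization.AtPrime P)) →
      IsWeaklyArfRing A) ∧
    (SerreSCondition A 1 → IsWeaklyArfRing A →
      (∀ S : Submonoid A, IsWeaklyArfRing (Localization S)) ∧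
      (∀ (P : Ideal A) [P.IsPrime], IsWeaklyArfRing (Localization.AtPrime P))) := by
  constructor
  · exact weaklyArf_of_localizations
  · intro hS1 hWA
    refine ⟨fun S => weaklyArf_localization_of_S1 hS1 hWA S, ?_⟩
    intro P _
    exact weaklyArf_localization_of_S1 hS1 hWA P.primeCompl
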